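/- Let H be a k-bounded antichain hypergraph on 2n vertices whose edges all have size at least 2, and let p = 1/(2n). Then w_p(H) ≤ 1/2, i.e., Σ_{E ∈ E(H)} (2n)^{−|E|} ≤ 1/2. -/
import Mathlib

open Finset Nat


lemma two_mul_choose_le {m s : ℕ} (hs : 2 ≤ s) : 2 * m.choose s ≤ m ^ s :=
  calc 2 * m.choose s ≤ s ! * m.choose s := by
        exact Nat.mul_le_mul_right _ (hs.trans (Nat.self_le_factorial s))
    _ = m.descFactorial s := (Nat.descFactorial_eq_factorial_mul_choose m s).symm
    _ ≤ m ^ s := Nat.descFactorial_le_pow m s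

/-- A k-bounded antichain on 2n vertices all of whose edges have size at least 2
has total p-weight at most 1/2 for p = 1/(2n). -/
theorem stmt_7 {V : Type*} [Fintype V] [DecidableEq V] (n k : ℕ)
    (H : Finset (Finset V)) (hV : Fintype.card V = 2 * n)
    (hH : IsAntichain (· ⊆ ·) (H : Set (Finset V)))
    (hsize : ∀ E ∈ H, 2 ≤ E.card ∧ E.card ≤ k) :
    ∑ E ∈ H, (1 / (2 * n : ℝ)) ^ E.card ≤ 1 / 2 := by
  have hcard : ∀ E ∈ H, E.card ≤ 2 * n := fun E hE => by
    simpa [hV] using Finset.card_le_card (Finset.subset_univ E)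
  have key : ∀ E ∈ H, (1 / (2 * n : ℝ)) ^ E.card
      ≤ (1 / 2) * ((#(H # E.card) : ℝ) / (2 * n).choose E.card / #(H # E.card)) := by
    intro E hE
    have h2 := (hsize E hE).1
    have hle := hcard E hE
    have hn : 1 ≤ n := by omega
    have hchoose : 0 < (2 * n).choose E.card := Nat.choose_pos hle
    have hslice : 0 < #(H # E.card) := by
      rw [Finset.card_pos]
      exact ⟨E, by simp [Finset.mem_slice, hE]⟩
    rw [div_right_comm, div_self (by positivity), div_pow, one_pow,
      show (1:ℝ)/2 * (1 / ((2 * n).choose E.card : ℝ))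
        = 1 / (2 * ((2 * n).choose E.card : ℝ)) by ring,
      div_le_div_iff₀ (by positivity) (by positivity), one_mul, one_mul]
    calc (2 : ℝ) * (2 * n).choose E.card = ((2 * (2 * n).choose E.card : ℕ) : ℝ) := by
          push_cast; ring
      _ ≤ (((2 * n) ^ E.card : ℕ) : ℝ) := by
          exact_mod_cast two_mul_choose_le h2
      _ = ((2 * n : ℝ)) ^ E.card := by push_cast; ring
  calc ∑ E ∈ H, (1 / (2 * n : ℝ)) ^ E.card
      ≤ ∑ E ∈ H, (1 / 2) * ((#(H # E.card) : ℝ) / (2 * n).choose E.card / #(H # E.card)) :=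
        Finset.sum_le_sum key
    _ = (1 / 2) * ∑ E ∈ H, ((#(H # E.card) : ℝ) / (2 * n).choose E.card / #(H # E.card)) := by
        rw [Finset.mul_sum]
    _ = (1 / 2) * ∑ r ∈ Finset.range (2 * n + 1), ∑ E ∈ H with E.card = r,
          ((#(H # E.card) : ℝ) / (2 * n).choose E.card / #(H # E.card)) := by
        rw [Finset.sum_fiberwise_of_maps_to (fun E hE =>
          Finset.mem_range.2 (Nat.lt_succ_of_le (hcard E hE)))]
    _ = (1 / 2) * ∑ r ∈ Finset.range (2 * n + 1),
          ((#(H # r) : ℝ) / (2 * n).choose r) := by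
        congr 1
        refine Finset.sum_congr rfl fun r _ => ?_
        rcases eq_or_ne (#(H # r)) 0 with h0 | h0
        · have hfr : (H.filter (fun E => E.card = r)) = H # r := rfl
          rw [hfr, Finset.card_eq_zero.1 h0]
          simp
        · have : ∀ E ∈ H.filter (fun E => E.card = r),
              ((#(H # E.card) : ℝ) / (2 * n).choose E.card / #(H # E.card))
              = ((#(H # r) : ℝ) / (2 * n).choose r / #(H # r)) := by
            intro E hE
            rw [(Finset.mem_filter.1 hE).2]
          rw [Finset.sum_congr rfl this, Finset.sum_const]
          have hfr : (H.filter (fun E => E.card = r)) = H # r := rfl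
          rw [hfr, nsmul_eq_mul, div_right_comm,
            div_self (show ((#(H # r) : ℝ)) ≠ 0 from Nat.cast_ne_zero.2 h0), mul_one_div]
    _ ≤ (1 / 2) * 1 := by
        gcongr
        have h := Finset.sum_card_slice_div_choose_le_one (𝕜 := ℝ) hH
        rw [hV] at h
        exact h
    _ = 1 / 2 := by ring
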